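/- arXiv:2408.09997 — 12 statements merged into one kernel-verified Lean document; each statement's English description precedes it below -/
import Mathlib

section
/- The underlying undirected graph of any two-colored quasi best match graph (2-qBMG) contains no induced path on 6 vertices (it is P6-free). -/
def QN1 {V : Type*} (E : V → V → Prop) : Prop :=
  ∀ u v, u ≠ v → ¬ E u v → ¬ E v u → ¬ ∃ w t, E u t ∧ E v w ∧ E t w

def QN2 {V : Type*} (E : V → V → Prop) : Prop :=
  ∀ u v w t, E u v → E v w → E w t → E u t

def QN3 {V : Type*} (E : V → V → Prop) : Prop :=
  ∀ u v, (∃ w, E u w ∧ E v w) → (∀ w, E u w → E v w) ∨ (∀ w, E v w → E u w)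

def QBip {V : Type*} (c : V → Bool) (E : V → V → Prop) : Prop :=
  ∀ u v, E u v → c u ≠ c v

/-- A 2-colored quasi best match graph: bipartite digraph satisfying (N1), (N2), (N3). -/
def IsQBMG {V : Type*} (c : V → Bool) (E : V → V → Prop) : Prop :=
  QBip c E ∧ QN1 E ∧ QN2 E ∧ QN3 E

/-- Adjacency in the underlying undirected graph. -/
def QAdj {V : Type*} (E : V → V → Prop) (u v : V) : Prop := E u v ∨ E v u

set_option maxHeartbeats 2000000 in
theorem P6_free {V : Type*} (c : V → Bool) (E : V → V → Prop) (h : IsQBMG c E) :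
    ¬ ∃ f : Fin 6 → V, Function.Injective f ∧
      ∀ i j : Fin 6, QAdj E (f i) (f j) ↔ (i.val + 1 = j.val ∨ j.val + 1 = i.val) := by
  rintro ⟨f, finj, hadj⟩
  obtain ⟨-, hN1, hN2, hN3⟩ := h
  have nadj : ∀ i j : Fin 6, ¬(i.val + 1 = j.val ∨ j.val + 1 = i.val) → ¬ E (f i) (f j) :=
    fun i j hn hE => hn ((hadj i j).1 (Or.inl hE))
  -- at least one direction along each path edge
  have or0 : E (f 0) (f 1) ∨ E (f 1) (f 0) := (hadj 0 1).2 (by decide)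
  have or1 : E (f 1) (f 2) ∨ E (f 2) (f 1) := (hadj 1 2).2 (by decide)
  have or2 : E (f 2) (f 3) ∨ E (f 3) (f 2) := (hadj 2 3).2 (by decide)
  have or3 : E (f 3) (f 4) ∨ E (f 4) (f 3) := (hadj 3 4).2 (by decide)
  have or4 : E (f 4) (f 5) ∨ E (f 5) (f 4) := (hadj 4 5).2 (by decide)
  -- N2 instances: no three aligned consecutive arcs
  have c2f0 : ¬(E (f 0) (f 1) ∧ E (f 1) (f 2) ∧ E (f 2) (f 3)) :=
    fun ⟨a, b, cc⟩ => nadj 0 3 (by decide) (hN2 _ _ _ _ a b cc)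
  have c2f1 : ¬(E (f 1) (f 2) ∧ E (f 2) (f 3) ∧ E (f 3) (f 4)) :=
    fun ⟨a, b, cc⟩ => nadj 1 4 (by decide) (hN2 _ _ _ _ a b cc)
  have c2f2 : ¬(E (f 2) (f 3) ∧ E (f 3) (f 4) ∧ E (f 4) (f 5)) :=
    fun ⟨a, b, cc⟩ => nadj 2 5 (by decide) (hN2 _ _ _ _ a b cc)
  have c2b0 : ¬(E (f 3) (f 2) ∧ E (f 2) (f 1) ∧ E (f 1) (f 0)) :=
    fun ⟨a, b, cc⟩ => nadj 3 0 (by decide) (hN2 _ _ _ _ a b cc)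
  have c2b1 : ¬(E (f 4) (f 3) ∧ E (f 3) (f 2) ∧ E (f 2) (f 1)) :=
    fun ⟨a, b, cc⟩ => nadj 4 1 (by decide) (hN2 _ _ _ _ a b cc)
  have c2b2 : ¬(E (f 5) (f 4) ∧ E (f 4) (f 3) ∧ E (f 3) (f 2)) :=
    fun ⟨a, b, cc⟩ => nadj 5 2 (by decide) (hN2 _ _ _ _ a b cc)
  -- N1 instances: distance-3 pairs
  have c1a0 : ¬(E (f 0) (f 1) ∧ E (f 1) (f 2) ∧ E (f 3) (f 2)) :=
    fun ⟨a, b, cc⟩ => hN1 (f 0) (f 3) (finj.ne (by decide)) (nadj 0 3 (by decide))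
      (nadj 3 0 (by decide)) ⟨f 2, f 1, a, cc, b⟩
  have c1a1 : ¬(E (f 1) (f 2) ∧ E (f 2) (f 3) ∧ E (f 4) (f 3)) :=
    fun ⟨a, b, cc⟩ => hN1 (f 1) (f 4) (finj.ne (by decide)) (nadj 1 4 (by decide))
      (nadj 4 1 (by decide)) ⟨f 3, f 2, a, cc, b⟩
  have c1a2 : ¬(E (f 2) (f 3) ∧ E (f 3) (f 4) ∧ E (f 5) (f 4)) :=
    fun ⟨a, b, cc⟩ => hN1 (f 2) (f 5) (finj.ne (by decide)) (nadj 2 5 (by decide))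
      (nadj 5 2 (by decide)) ⟨f 4, f 3, a, cc, b⟩
  have c1b0 : ¬(E (f 0) (f 1) ∧ E (f 2) (f 1) ∧ E (f 3) (f 2)) :=
    fun ⟨a, b, cc⟩ => hN1 (f 3) (f 0) (finj.ne (by decide)) (nadj 3 0 (by decide))
      (nadj 0 3 (by decide)) ⟨f 1, f 2, cc, a, b⟩
  have c1b1 : ¬(E (f 1) (f 2) ∧ E (f 3) (f 2) ∧ E (f 4) (f 3)) :=
    fun ⟨a, b, cc⟩ => hN1 (f 4) (f 1) (finj.ne (by decide)) (nadj 4 1 (by decide))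
      (nadj 1 4 (by decide)) ⟨f 2, f 3, cc, a, b⟩
  have c1b2 : ¬(E (f 2) (f 3) ∧ E (f 4) (f 3) ∧ E (f 5) (f 4)) :=
    fun ⟨a, b, cc⟩ => hN1 (f 5) (f 2) (finj.ne (by decide)) (nadj 5 2 (by decide))
      (nadj 2 5 (by decide)) ⟨f 3, f 4, cc, a, b⟩
  -- N3 instances
  have c31 : ¬(E (f 1) (f 0) ∧ E (f 1) (f 2) ∧ E (f 3) (f 2) ∧ E (f 3) (f 4)) := by
    rintro ⟨hb0, hf1, hb2, hf3⟩
    rcases hN3 (f 1) (f 3) ⟨f 2, hf1, hb2⟩ with h' | h'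
    · exact nadj 3 0 (by decide) (h' _ hb0)
    · exact nadj 1 4 (by decide) (h' _ hf3)
  have c32 : ¬(E (f 2) (f 1) ∧ E (f 2) (f 3) ∧ E (f 4) (f 3) ∧ E (f 4) (f 5)) := by
    rintro ⟨hb1, hf2, hb3, hf4⟩
    rcases hN3 (f 2) (f 4) ⟨f 3, hf2, hb3⟩ with h' | h'
    · exact nadj 4 1 (by decide) (h' _ hb1)
    · exact nadj 2 5 (by decide) (h' _ hf4)
  rcases or0 with h0 | h0 <;> rcases or1 with h1 | h1 <;> rcases or2 with h2 | h2 <;>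
    rcases or3 with h3 | h3 <;> rcases or4 with h4 | h4
  · exact c2f0 ⟨h0, h1, h2⟩
  · exact c2f0 ⟨h0, h1, h2⟩
  · exact c2f0 ⟨h0, h1, h2⟩
  · exact c2f0 ⟨h0, h1, h2⟩
  · exact c1a0 ⟨h0, h1, h2⟩
  · exact c1a0 ⟨h0, h1, h2⟩
  · exact c1a0 ⟨h0, h1, h2⟩
  · exact c2b2 ⟨h4, h3, h2⟩
  · exact c2f2 ⟨h2, h3, h4⟩
  · exact c1a2 ⟨h2, h3, h4⟩
  · exact c32 ⟨h1, h2, h3, h4⟩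
  · exact c1b2 ⟨h2, h3, h4⟩
  · exact c1b0 ⟨h0, h1, h2⟩
  · exact c1b0 ⟨h0, h1, h2⟩
  · exact c2b1 ⟨h3, h2, h1⟩
  · exact c2b1 ⟨h3, h2, h1⟩
  · exact c2f1 ⟨h1, h2, h3⟩
  · exact c2f1 ⟨h1, h2, h3⟩
  · exact c1a1 ⟨h1, h2, h3⟩
  · exact c1a1 ⟨h1, h2, h3⟩
  · exact c31 ⟨h0, h1, h2, h3⟩
  · exact c31 ⟨h0, h1, h2, h3⟩
  · exact c1b1 ⟨h1, h2, h3⟩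
  · exact c2b2 ⟨h4, h3, h2⟩
  · exact c2f2 ⟨h2, h3, h4⟩
  · exact c1a2 ⟨h2, h3, h4⟩
  · exact c32 ⟨h1, h2, h3, h4⟩
  · exact c1b2 ⟨h2, h3, h4⟩
  · exact c2b0 ⟨h2, h1, h0⟩
  · exact c2b0 ⟨h2, h1, h0⟩
  · exact c2b0 ⟨h2, h1, h0⟩
  · exact c2b0 ⟨h2, h1, h0⟩
end

section
/- The underlying undirected graph of any two-colored quasi best match graph (2-qBMG) contains no induced cycle on 6 vertices (it is C6-free). -/
/-- No two consecutive "forward" arcs on four consecutive cycle vertices. -/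
lemma qbmg_L1 {V : Type*} {E : V → V → Prop} (hN1 : QN1 E) (hN2 : QN2 E) {a b c d : V}
    (had : a ≠ d) (nad : ¬ E a d) (nda : ¬ E d a)
    (hab : E a b) (hbc : E b c) (hcd : E c d ∨ E d c) : False := by
  rcases hcd with hcd | hdc
  · exact nad (hN2 a b c d hab hbc hcd)
  · exact hN1 a d had nad nda ⟨c, b, hab, hdc, hbc⟩

/-- No two consecutive "backward" arcs on four consecutive cycle vertices. -/
lemma qbmg_L2 {V : Type*} {E : V → V → Prop} (hN1 : QN1 E) (hN2 : QN2 E) {a b c d : V}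
    (had : a ≠ d) (nad : ¬ E a d) (nda : ¬ E d a)
    (hcb : E c b) (hdc : E d c) (hab : E a b ∨ E b a) : False := by
  rcases hab with hab | hba
  · exact hN1 d a (fun e => had e.symm) nda nad ⟨b, c, hdc, hab, hcb⟩
  · exact nda (hN2 d c b a hdc hcb hba)

theorem C6_free {V : Type*} (c : V → Bool) (E : V → V → Prop) (h : IsQBMG c E) :
    ¬ ∃ f : Fin 6 → V, Function.Injective f ∧
      ∀ i j : Fin 6, QAdj E (f i) (f j) ↔
        ((i.val + 1) % 6 = j.val ∨ (j.val + 1) % 6 = i.val) := by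
  rintro ⟨f, hinj, hadj⟩
  obtain ⟨-, hN1, hN2, hN3⟩ := h
  -- the six cycle edges (as undirected adjacencies)
  have h01 : E (f 0) (f 1) ∨ E (f 1) (f 0) := (hadj 0 1).mpr (by decide)
  have h12 : E (f 1) (f 2) ∨ E (f 2) (f 1) := (hadj 1 2).mpr (by decide)
  have h23 : E (f 2) (f 3) ∨ E (f 3) (f 2) := (hadj 2 3).mpr (by decide)
  have h34 : E (f 3) (f 4) ∨ E (f 4) (f 3) := (hadj 3 4).mpr (by decide)
  have h45 : E (f 4) (f 5) ∨ E (f 5) (f 4) := (hadj 4 5).mpr (by decide)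
  have h50 : E (f 5) (f 0) ∨ E (f 0) (f 5) := (hadj 5 0).mpr (by decide)
  -- the antipodal pairs are non-adjacent
  have n03 : ¬ QAdj E (f 0) (f 3) := fun hq => by
    have := (hadj 0 3).mp hq; revert this; decide
  have n14 : ¬ QAdj E (f 1) (f 4) := fun hq => by
    have := (hadj 1 4).mp hq; revert this; decide
  have n25 : ¬ QAdj E (f 2) (f 5) := fun hq => by
    have := (hadj 2 5).mp hq; revert this; decide
  have nE03 : ¬ E (f 0) (f 3) := fun e => n03 (Or.inl e)
  have nE30 : ¬ E (f 3) (f 0) := fun e => n03 (Or.inr e)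
  have nE14 : ¬ E (f 1) (f 4) := fun e => n14 (Or.inl e)
  have nE41 : ¬ E (f 4) (f 1) := fun e => n14 (Or.inr e)
  have nE25 : ¬ E (f 2) (f 5) := fun e => n25 (Or.inl e)
  have nE52 : ¬ E (f 5) (f 2) := fun e => n25 (Or.inr e)
  have ne03 : f 0 ≠ f 3 := hinj.ne (by decide)
  have ne30 : f 3 ≠ f 0 := ne03.symm
  have ne14 : f 1 ≠ f 4 := hinj.ne (by decide)
  have ne41 : f 4 ≠ f 1 := ne14.symm
  have ne25 : f 2 ≠ f 5 := hinj.ne (by decide)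
  have ne52 : f 5 ≠ f 2 := ne25.symm
  rcases h01 with f0 | b0
  · -- case E (f 0) (f 1): orientation alternates as 0→1, 2→1, 2→3, 4→3, 4→5, 0→5
    have b1 : E (f 2) (f 1) := by
      rcases h12 with f1 | b1
      · exact (qbmg_L1 hN1 hN2 ne03 nE03 nE30 f0 f1 h23).elim
      · exact b1
    have f2 : E (f 2) (f 3) := by
      rcases h23 with f2 | b2
      · exact f2
      · exact (qbmg_L2 hN1 hN2 ne03 nE03 nE30 b1 b2 (Or.inl f0)).elim
    have b3 : E (f 4) (f 3) := by
      rcases h34 with f3 | b3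
      · exact (qbmg_L1 hN1 hN2 ne25 nE25 nE52 f2 f3 h45).elim
      · exact b3
    have f4 : E (f 4) (f 5) := by
      rcases h45 with f4 | b4
      · exact f4
      · exact (qbmg_L2 hN1 hN2 ne25 nE25 nE52 b3 b4 h23).elim
    have b5 : E (f 0) (f 5) := by
      rcases h50 with f5 | b5
      · exact (qbmg_L1 hN1 hN2 ne41 nE41 nE14 f4 f5 (Or.inl f0)).elim
      · exact b5
    rcases hN3 (f 0) (f 2) ⟨f 1, f0, b1⟩ with hsub | hsub
    · exact nE25 (hsub (f 5) b5)
    · exact nE03 (hsub (f 3) f2)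
  · -- case E (f 1) (f 0): orientation alternates as 1→0, 1→2, 3→2, 3→4, 5→4, 5→0
    have f1 : E (f 1) (f 2) := by
      rcases h12 with f1 | b1
      · exact f1
      · exact (qbmg_L2 hN1 hN2 ne52 nE52 nE25 b0 b1 h50).elim
    have b2 : E (f 3) (f 2) := by
      rcases h23 with f2 | b2
      · exact (qbmg_L1 hN1 hN2 ne14 nE14 nE41 f1 f2 h34).elim
      · exact b2
    have f3 : E (f 3) (f 4) := by
      rcases h34 with f3 | b3
      · exact f3
      · exact (qbmg_L2 hN1 hN2 ne14 nE14 nE41 b2 b3 h12).elim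
    have b4 : E (f 5) (f 4) := by
      rcases h45 with f4 | b4
      · exact (qbmg_L1 hN1 hN2 ne30 nE30 nE03 f3 f4 h50).elim
      · exact b4
    have f5 : E (f 5) (f 0) := by
      rcases h50 with f5 | b5
      · exact f5
      · exact (qbmg_L2 hN1 hN2 ne30 nE30 nE03 b4 b5 h34).elim
    rcases hN3 (f 1) (f 3) ⟨f 2, f1, b2⟩ with hsub | hsub
    · exact nE30 (hsub (f 0) b0)
    · exact nE14 (hsub (f 4) f3)
end

section
/- Up to isomorphism, there are exactly six 2-qBMGs on five vertices {v1,...,v5} whose underlying undirected graph is the chordless path v1v2v3v4v5; their edge sets are {v1v2,v3v2,v3v4,v4v5}, {v1v2,v3v2,v3v4,v5v4}, {v2v1,v3v2,v3v4,v4v5}, {v1v2,v2v1,v3v2,v3v4,v4v5}, {v1v2,v2v1,v3v2,v3v4,v5v4}, and {v1v2,v2v1,v3v2,v3v4,v4v5,v5v4}. -/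
/-- Digraph isomorphism on a fixed vertex set. -/
def QIso {V : Type*} (E E' : V → V → Prop) : Prop :=
  ∃ φ : Equiv.Perm V, ∀ u v, E u v ↔ E' (φ u) (φ v)

def relOf {n : ℕ} (l : List (Fin n × Fin n)) : Fin n → Fin n → Prop :=
  fun i j => (i, j) ∈ l

/-- The underlying undirected graph is the chordless path v1 v2 ... vn. -/
def isPathUnder {n : ℕ} (E : Fin n → Fin n → Prop) : Prop :=
  ∀ i j : Fin n, QAdj E i j ↔ (i.val + 1 = j.val ∨ j.val + 1 = i.val)

def L4 : List (Fin 5 → Fin 5 → Prop) :=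
  [relOf [(0,1),(2,1),(2,3),(3,4)],
   relOf [(0,1),(2,1),(2,3),(4,3)],
   relOf [(1,0),(2,1),(2,3),(3,4)],
   relOf [(0,1),(1,0),(2,1),(2,3),(3,4)],
   relOf [(0,1),(1,0),(2,1),(2,3),(4,3)],
   relOf [(0,1),(1,0),(2,1),(2,3),(3,4),(4,3)]]

/- ### Auxiliary definitions -/

def L4b : List (List (Fin 5 × Fin 5)) :=
  [[(0,1),(2,1),(2,3),(3,4)],
   [(0,1),(2,1),(2,3),(4,3)],
   [(1,0),(2,1),(2,3),(3,4)],
   [(0,1),(1,0),(2,1),(2,3),(3,4)],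
   [(0,1),(1,0),(2,1),(2,3),(4,3)],
   [(0,1),(1,0),(2,1),(2,3),(3,4),(4,3)]]

lemma L4_eq : L4 = L4b.map relOf := rfl

def rev : Fin 5 → Fin 5 := fun i => ⟨4 - i.val, by omega⟩

def revPerm : Equiv.Perm (Fin 5) :=
  ⟨rev, rev, fun x => by fin_cases x <;> rfl, fun x => by fin_cases x <;> rfl⟩

def tup (a b c d e : Fin 5) : Fin 5 → Fin 5 := fun i =>
  if i.val = 0 then a else if i.val = 1 then b else if i.val = 2 then c
  else if i.val = 3 then d else e

/-- Encoding of a digraph whose underlying undirected graph is the path: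
for each path edge `k,k+1`, state `0` = forward only, `1` = backward only,
`2` = both directions. -/
def bE' (a b c d : Fin 3) : Fin 5 → Fin 5 → Prop := fun i j =>
  let f : Fin 5 → Fin 3 := fun k =>
    if k.val = 0 then a else if k.val = 1 then b else if k.val = 2 then c else d
  (i.val + 1 = j.val ∧ f i ≠ 1) ∨ (j.val + 1 = i.val ∧ f j ≠ 0)

def pIso (p : Fin 5 → Fin 5) (E E' : Fin 5 → Fin 5 → Prop) : Prop :=
  ∀ u v, E u v ↔ E' (p u) (p v)

/- ### Decidability instances -/

instance decBE' (a b c d : Fin 3) : ∀ i j, Decidable (bE' a b c d i j) := fun i j => by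
  unfold bE'; infer_instance

instance decRelOf {n : ℕ} (l : List (Fin n × Fin n)) : ∀ i j, Decidable (relOf l i j) :=
  fun i j => by unfold relOf; infer_instance

instance decPIso (p : Fin 5 → Fin 5) (E E' : Fin 5 → Fin 5 → Prop)
    [DecidableRel E] [DecidableRel E'] : Decidable (pIso p E E') := by
  unfold pIso; infer_instance

section decInst
variable {V : Type*} [Fintype V] [DecidableEq V] (E : V → V → Prop) [DecidableRel E]
  (c : V → Bool)

instance : Decidable (QN1 E) := by unfold QN1; infer_instance
instance : Decidable (QN2 E) := by unfold QN2; infer_instance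
instance : Decidable (QN3 E) := by unfold QN3; infer_instance
instance : Decidable (QBip c E) := by unfold QBip; infer_instance
instance : Decidable (IsQBMG c E) := by unfold IsQBMG; infer_instance
instance : ∀ u v, Decidable (QAdj E u v) := fun u v => by unfold QAdj; infer_instance

end decInst

instance (n : ℕ) (E : Fin n → Fin n → Prop) [DecidableRel E] :
    Decidable (isPathUnder E) := by unfold isPathUnder; infer_instance

/- ### Transfer lemmas -/

section congrSec
variable {V : Type*} (E E' : V → V → Prop)

lemma qbmg_congr (h : ∀ u v, E u v ↔ E' u v) (c : V → Bool) (hQ : IsQBMG c E) :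
    IsQBMG c E' := by
  obtain ⟨h1, h2, h3, h4⟩ := hQ
  refine ⟨fun u v huv => h1 u v ((h u v).2 huv),
    fun u v hne h1' h2' ⟨w, t, a, b, d⟩ =>
      h2 u v hne (fun x => h1' ((h u v).1 x)) (fun x => h2' ((h v u).1 x))
        ⟨w, t, (h u t).2 a, (h v w).2 b, (h t w).2 d⟩,
    fun u v w t a b d => (h u t).1 (h3 u v w t ((h u v).2 a) ((h v w).2 b) ((h w t).2 d)),
    fun u v ⟨w, a, b⟩ => by
      rcases h4 u v ⟨w, (h u w).2 a, (h v w).2 b⟩ with hc | hc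
      · exact Or.inl fun x hx => (h v x).1 (hc x ((h u x).2 hx))
      · exact Or.inr fun x hx => (h u x).1 (hc x ((h v x).2 hx))⟩

lemma qiso_of_iff (h : ∀ u v, E u v ↔ E' u v) : QIso E E' :=
  ⟨Equiv.refl V, fun u v => h u v⟩

lemma qiso_trans {E₁ E₂ E₃ : V → V → Prop} (h1 : QIso E₁ E₂) (h2 : QIso E₂ E₃) :
    QIso E₁ E₃ := by
  obtain ⟨φ, hφ⟩ := h1; obtain ⟨ψ, hψ⟩ := h2
  exact ⟨φ.trans ψ, fun u v => (hφ u v).trans (hψ (φ u) (φ v))⟩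

end congrSec

/-- Every digraph whose underlying undirected graph is the path is pointwise
equivalent to some `bE' a b c d`. -/
lemma path_rep (E : Fin 5 → Fin 5 → Prop) (hP : isPathUnder E) :
    ∃ a b c d : Fin 3, ∀ u v, E u v ↔ bE' a b c d u v := by
  classical
  refine ⟨(if E 0 1 then if E 1 0 then 2 else 0 else 1),
      (if E 1 2 then if E 2 1 then 2 else 0 else 1),
      (if E 2 3 then if E 3 2 then 2 else 0 else 1),
      (if E 3 4 then if E 4 3 then 2 else 0 else 1), ?_⟩
  intro u v
  have h1 := hP u v
  have h2 := hP v u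
  fin_cases u <;> fin_cases v <;>
    simp only [QAdj, bE'] at h1 h2 ⊢ <;>
    norm_num at h1 h2 ⊢ <;>
    (try (split_ifs <;> simp_all)) <;> tauto

set_option maxRecDepth 100000 in
/-- Automorphisms of the undirected path on five vertices. -/
lemma pathAuto5 : ∀ a b c d e : Fin 5,
    (∀ u v : Fin 5, tup a b c d e u = tup a b c d e v → u = v) →
    (∀ u v : Fin 5, (u.val + 1 = v.val ∨ v.val + 1 = u.val) ↔
      ((tup a b c d e u).val + 1 = (tup a b c d e v).val ∨
       (tup a b c d e v).val + 1 = (tup a b c d e u).val)) →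
    (∀ x, tup a b c d e x = x) ∨ (∀ x, tup a b c d e x = rev x) := by decide

/-- Any isomorphism between digraphs underlain by the path is the identity or
the reversal. -/
lemma qiso_path_cases {E E' : Fin 5 → Fin 5 → Prop} (hE : isPathUnder E)
    (hE' : isPathUnder E') (h : QIso E E') :
    (∀ u v, E u v ↔ E' u v) ∨ (∀ u v, E u v ↔ E' (rev u) (rev v)) := by
  obtain ⟨φ, hφ⟩ := h
  have htup : ∀ x, tup (φ 0) (φ 1) (φ 2) (φ 3) (φ 4) x = φ x := by
    intro x; fin_cases x <;> rfl
  have hadj : ∀ u v : Fin 5, (u.val + 1 = v.val ∨ v.val + 1 = u.val) ↔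
      ((φ u).val + 1 = (φ v).val ∨ (φ v).val + 1 = (φ u).val) := by
    intro u v
    rw [← hE u v, ← hE' (φ u) (φ v)]
    exact or_congr (hφ u v) (hφ v u)
  rcases pathAuto5 (φ 0) (φ 1) (φ 2) (φ 3) (φ 4)
      (fun u v h' => φ.injective (by rw [← htup u, ← htup v, h']))
      (fun u v => by rw [htup u, htup v]; exact hadj u v) with h1 | h1
  · left; intro u v
    have hu : φ u = u := (htup u).symm.trans (h1 u)
    have hv : φ v = v := (htup v).symm.trans (h1 v)
    rw [hφ u v, hu, hv]
  · right; intro u v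
    have hu : φ u = rev u := (htup u).symm.trans (h1 u)
    have hv : φ v = rev v := (htup v).symm.trans (h1 v)
    rw [hφ u v, hu, hv]

lemma noIso (a b : List (Fin 5 × Fin 5)) (hpa : isPathUnder (relOf a))
    (hpb : isPathUnder (relOf b))
    (h1 : ¬ ∀ u v, relOf a u v ↔ relOf b u v)
    (h2 : ¬ ∀ u v, relOf a u v ↔ relOf b (rev u) (rev v)) :
    ¬ QIso (relOf a) (relOf b) :=
  fun h => (qiso_path_cases hpa hpb h).elim h1 h2

set_option maxRecDepth 100000 in
/-- The finite classification, by decision procedure. -/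
lemma classify : ∀ a b c d : Fin 3, QN1 (bE' a b c d) → QN2 (bE' a b c d) →
    QN3 (bE' a b c d) →
    ∃ l ∈ L4b, pIso id (bE' a b c d) (relOf l) ∨ pIso rev (bE' a b c d) (relOf l) := by
  decide

theorem six_qBMGs_on_P5 :
    (∀ E ∈ L4, (∃ c, IsQBMG c E) ∧ isPathUnder E) ∧
    L4.Pairwise (fun E E' => ¬ QIso E E') ∧
    (∀ E : Fin 5 → Fin 5 → Prop, (∃ c, IsQBMG c E) → isPathUnder E →
      ∃ E' ∈ L4, QIso E E') := by
  refine ⟨?_, ?_, ?_⟩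
  · intro E hE
    fin_cases hE <;>
      exact ⟨⟨fun i => decide (i.val % 2 = 0), by decide⟩, by decide⟩
  · rw [L4_eq, List.pairwise_map, List.pairwise_iff_getElem]
    intro i j hi hj hij
    have hi6 : i < 6 := by simpa [L4b] using hi
    have hj6 : j < 6 := by simpa [L4b] using hj
    interval_cases i <;> interval_cases j <;>
      first
        | omega
        | (simp only [L4b, List.getElem_cons_zero, List.getElem_cons_succ]
           exact noIso _ _ (by decide) (by decide) (by decide) (by decide))
  · intro E hQ hP
    obtain ⟨a, b, c, d, hf⟩ := path_rep E hP
    obtain ⟨c0, hc0⟩ := hQ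
    have hB : IsQBMG c0 (bE' a b c d) := qbmg_congr E _ hf c0 hc0
    obtain ⟨l, hl, hiso⟩ := classify a b c d hB.2.1 hB.2.2.1 hB.2.2.2
    refine ⟨relOf l, L4_eq ▸ List.mem_map_of_mem (f := relOf) hl, ?_⟩
    refine qiso_trans (qiso_of_iff E _ hf) ?_
    rcases hiso with h | h
    · exact ⟨Equiv.refl _, h⟩
    · exact ⟨revPerm, h⟩
end

section
/- In any 2-qBMG, there is no induced path v1v2v3v4 in the underlying undirected graph (chordless, so v1v3, v1v4, v2v4 are non-adjacent) with directed edges v1v2 and v2v3 both present. -/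
theorem no_forward_forward_P4 {V : Type*} (c : V → Bool) (E : V → V → Prop)
    (h : IsQBMG c E) (v1 v2 v3 v4 : V)
    (h12ne : v1 ≠ v2) (h13ne : v1 ≠ v3) (h14ne : v1 ≠ v4)
    (h23ne : v2 ≠ v3) (h24ne : v2 ≠ v4) (h34ne : v3 ≠ v4)
    (a12 : QAdj E v1 v2) (a23 : QAdj E v2 v3) (a34 : QAdj E v3 v4)
    (n13 : ¬ QAdj E v1 v3) (n14 : ¬ QAdj E v1 v4) (n24 : ¬ QAdj E v2 v4) :
    ¬ (E v1 v2 ∧ E v2 v3) := by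
  rintro ⟨e12, e23⟩
  obtain ⟨hbip, hn1, hn2, hn3⟩ := h
  rcases a34 with e34 | e43
  · exact n14 (Or.inl (hn2 v1 v2 v3 v4 e12 e23 e34))
  · exact hn1 v1 v4 h14ne (fun e => n14 (Or.inl e)) (fun e => n14 (Or.inr e))
      ⟨v3, v2, e12, e43, e23⟩
end

section
/- In any 2-qBMG, there is no induced path v1v2v3v4v5 in the underlying undirected graph with directed edges v2v1 and v2v3 both present (i.e., v2 has two out-neighbors, its endpoints on the chordless path). -/
theorem no_out_out_P5 {V : Type*} (c : V → Bool) (E : V → V → Prop)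
    (h : IsQBMG c E) (v1 v2 v3 v4 v5 : V)
    (hne : [v1, v2, v3, v4, v5].Pairwise (· ≠ ·))
    (a12 : QAdj E v1 v2) (a23 : QAdj E v2 v3) (a34 : QAdj E v3 v4) (a45 : QAdj E v4 v5)
    (n13 : ¬ QAdj E v1 v3) (n14 : ¬ QAdj E v1 v4) (n15 : ¬ QAdj E v1 v5)
    (n24 : ¬ QAdj E v2 v4) (n25 : ¬ QAdj E v2 v5) (n35 : ¬ QAdj E v3 v5) :
    ¬ (E v2 v1 ∧ E v2 v3) := by
  rintro ⟨h21, h23⟩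
  obtain ⟨_, hN1, hN2, hN3⟩ := h
  simp only [List.pairwise_cons, List.mem_cons, List.not_mem_nil] at hne
  have ne25 : v2 ≠ v5 := hne.2.1 v5 (Or.inr (Or.inr (Or.inl rfl)))
  have ne52 : v5 ≠ v2 := fun e => ne25 e.symm
  have hE25 : ¬ E v2 v5 := fun e => n25 (Or.inl e)
  have hE52 : ¬ E v5 v2 := fun e => n25 (Or.inr e)
  rcases a34 with h34 | h43
  · rcases a45 with h45 | h54
    · exact n25 (Or.inl (hN2 v2 v3 v4 v5 h23 h34 h45))
    · exact hN1 v2 v5 ne25 hE25 hE52 ⟨v4, v3, h23, h54, h34⟩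
  · rcases hN3 v2 v4 ⟨v3, h23, h43⟩ with h24 | h42
    · exact n14 (Or.inr (h24 v1 h21))
    · rcases a45 with h45 | h54
      · exact n25 (Or.inl (h42 v5 h45))
      · exact hN1 v5 v2 ne52 hE52 hE25 ⟨v3, v4, h54, h23, h43⟩
end

section
/- Every 2-qBMG on four vertices whose underlying undirected graph is a chordless path on 4 vertices has a sink, i.e., a vertex with empty out-neighborhood. -/
theorem qBMG_P4_has_sink (c : Fin 4 → Bool) (E : Fin 4 → Fin 4 → Prop)
    (h : IsQBMG c E)
    (hpath : ∀ i j : Fin 4, QAdj E i j ↔ (i.val + 1 = j.val ∨ j.val + 1 = i.val)) :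
    ∃ v, ∀ w, ¬ E v w := by
  by_contra hs
  push_neg at hs
  obtain ⟨w0, hw0⟩ := hs 0
  obtain ⟨w3, hw3⟩ := hs 3
  have h01 : E 0 1 := by
    have hv := (hpath 0 w0).1 (Or.inl hw0)
    have : w0 = 1 := by
      fin_cases w0 <;> revert hv <;> decide
    rwa [this] at hw0
  have h32 : E 3 2 := by
    have hv := (hpath 3 w3).1 (Or.inl hw3)
    have : w3 = 2 := by
      fin_cases w3 <;> revert hv <;> decide
    rwa [this] at hw3
  have hN1 := h.2.1
  have hn03 : ¬ E (0 : Fin 4) 3 := fun he => by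
    have := (hpath 0 3).1 (Or.inl he); revert this; decide
  have hn30 : ¬ E (3 : Fin 4) 0 := fun he => by
    have := (hpath 3 0).1 (Or.inl he); revert this; decide
  have hn12 : ¬ E (1 : Fin 4) 2 := fun he =>
    hN1 0 3 (by decide) hn03 hn30 ⟨2, 1, h01, h32, he⟩
  have hn21 : ¬ E (2 : Fin 4) 1 := fun he =>
    hN1 3 0 (by decide) hn30 hn03 ⟨1, 2, h32, h01, he⟩
  have := (hpath 1 2).2 (Or.inl (by norm_num))
  exact this.elim hn12 hn21
end

section
/- In any 2-qBMG, there is no chordless 6-cycle v1v2v3v4v5v6v1 in the underlying undirected graph; equivalently, any six vertices inducing a cycle with the only adjacencies being consecutive pairs and v6v1 cannot occur. -/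
theorem no_chordless_C6 {V : Type*} (c : V → Bool) (E : V → V → Prop)
    (h : IsQBMG c E) (v1 v2 v3 v4 v5 v6 : V)
    (hne : [v1, v2, v3, v4, v5, v6].Pairwise (· ≠ ·))
    (a12 : QAdj E v1 v2) (a23 : QAdj E v2 v3) (a34 : QAdj E v3 v4)
    (a45 : QAdj E v4 v5) (a56 : QAdj E v5 v6) (a61 : QAdj E v6 v1)
    (n13 : ¬ QAdj E v1 v3) (n14 : ¬ QAdj E v1 v4) (n15 : ¬ QAdj E v1 v5)
    (n24 : ¬ QAdj E v2 v4) (n25 : ¬ QAdj E v2 v5) (n26 : ¬ QAdj E v2 v6)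
    (n35 : ¬ QAdj E v3 v5) (n36 : ¬ QAdj E v3 v6) (n46 : ¬ QAdj E v4 v6) :
    False := by
  obtain ⟨hb, h1, h2, h3⟩ := h
  simp only [List.pairwise_cons] at hne
  have ne14 : v1 ≠ v4 := hne.1 v4 (by simp)
  have ne25 : v2 ≠ v5 := hne.2.1 v5 (by simp)
  have ne36 : v3 ≠ v6 := hne.2.2.1 v6 (by simp)
  have ne41 : v4 ≠ v1 := ne14.symm
  have ne52 : v5 ≠ v2 := ne25.symm
  have ne63 : v6 ≠ v3 := ne36.symm
  have e14 : ¬ E v1 v4 := fun e => n14 (Or.inl e)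
  have e41 : ¬ E v4 v1 := fun e => n14 (Or.inr e)
  have e25 : ¬ E v2 v5 := fun e => n25 (Or.inl e)
  have e52 : ¬ E v5 v2 := fun e => n25 (Or.inr e)
  have e36 : ¬ E v3 v6 := fun e => n36 (Or.inl e)
  have e63 : ¬ E v6 v3 := fun e => n36 (Or.inr e)
  have hF1 : E v1 v2 → E v2 v3 → E v3 v4 → False := fun x y z => e14 (h2 _ _ _ _ x y z)
  have hB1 : E v4 v3 → E v3 v2 → E v2 v1 → False := fun x y z => e41 (h2 _ _ _ _ x y z)
  have hF2 : E v2 v3 → E v3 v4 → E v4 v5 → False := fun x y z => e25 (h2 _ _ _ _ x y z)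
  have hB2 : E v5 v4 → E v4 v3 → E v3 v2 → False := fun x y z => e52 (h2 _ _ _ _ x y z)
  have hF3 : E v3 v4 → E v4 v5 → E v5 v6 → False := fun x y z => e36 (h2 _ _ _ _ x y z)
  have hB3 : E v6 v5 → E v5 v4 → E v4 v3 → False := fun x y z => e63 (h2 _ _ _ _ x y z)
  have hF4 : E v4 v5 → E v5 v6 → E v6 v1 → False := fun x y z => e41 (h2 _ _ _ _ x y z)
  have hB4 : E v1 v6 → E v6 v5 → E v5 v4 → False := fun x y z => e14 (h2 _ _ _ _ x y z)
  have hF5 : E v5 v6 → E v6 v1 → E v1 v2 → False := fun x y z => e52 (h2 _ _ _ _ x y z)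
  have hB5 : E v2 v1 → E v1 v6 → E v6 v5 → False := fun x y z => e25 (h2 _ _ _ _ x y z)
  have hF6 : E v6 v1 → E v1 v2 → E v2 v3 → False := fun x y z => e63 (h2 _ _ _ _ x y z)
  have hB6 : E v3 v2 → E v2 v1 → E v1 v6 → False := fun x y z => e36 (h2 _ _ _ _ x y z)
  have hA1 : E v1 v2 → E v2 v3 → E v4 v3 → False := fun x y z => h1 v1 v4 ne14 e14 e41 ⟨v3, v2, x, z, y⟩
  have hC1 : E v1 v2 → E v3 v2 → E v4 v3 → False := fun x y z => h1 v4 v1 ne41 e41 e14 ⟨v2, v3, z, x, y⟩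
  have hA2 : E v2 v3 → E v3 v4 → E v5 v4 → False := fun x y z => h1 v2 v5 ne25 e25 e52 ⟨v4, v3, x, z, y⟩
  have hC2 : E v2 v3 → E v4 v3 → E v5 v4 → False := fun x y z => h1 v5 v2 ne52 e52 e25 ⟨v3, v4, z, x, y⟩
  have hA3 : E v3 v4 → E v4 v5 → E v6 v5 → False := fun x y z => h1 v3 v6 ne36 e36 e63 ⟨v5, v4, x, z, y⟩
  have hC3 : E v3 v4 → E v5 v4 → E v6 v5 → False := fun x y z => h1 v6 v3 ne63 e63 e36 ⟨v4, v5, z, x, y⟩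
  have hA4 : E v4 v5 → E v5 v6 → E v1 v6 → False := fun x y z => h1 v4 v1 ne41 e41 e14 ⟨v6, v5, x, z, y⟩
  have hC4 : E v4 v5 → E v6 v5 → E v1 v6 → False := fun x y z => h1 v1 v4 ne14 e14 e41 ⟨v5, v6, z, x, y⟩
  have hA5 : E v5 v6 → E v6 v1 → E v2 v1 → False := fun x y z => h1 v5 v2 ne52 e52 e25 ⟨v1, v6, x, z, y⟩
  have hC5 : E v5 v6 → E v1 v6 → E v2 v1 → False := fun x y z => h1 v2 v5 ne25 e25 e52 ⟨v6, v1, z, x, y⟩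
  have hA6 : E v6 v1 → E v1 v2 → E v3 v2 → False := fun x y z => h1 v6 v3 ne63 e63 e36 ⟨v2, v1, x, z, y⟩
  have hC6 : E v6 v1 → E v2 v1 → E v3 v2 → False := fun x y z => h1 v3 v6 ne36 e36 e63 ⟨v1, v2, z, x, y⟩
  have hS1 : E v1 v2 → E v3 v2 → E v1 v6 → E v3 v4 → False := fun x y z w =>
    (h3 v1 v3 ⟨v2, x, y⟩).elim (fun hh => e36 (hh _ z)) (fun hh => e14 (hh _ w))
  have hS2 : E v2 v3 → E v4 v3 → E v2 v1 → E v4 v5 → False := fun x y z w =>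
    (h3 v2 v4 ⟨v3, x, y⟩).elim (fun hh => e41 (hh _ z)) (fun hh => e25 (hh _ w))
  have hS3 : E v3 v4 → E v5 v4 → E v3 v2 → E v5 v6 → False := fun x y z w =>
    (h3 v3 v5 ⟨v4, x, y⟩).elim (fun hh => e52 (hh _ z)) (fun hh => e36 (hh _ w))
  have hS4 : E v4 v5 → E v6 v5 → E v4 v3 → E v6 v1 → False := fun x y z w =>
    (h3 v4 v6 ⟨v5, x, y⟩).elim (fun hh => e63 (hh _ z)) (fun hh => e41 (hh _ w))
  have hS5 : E v5 v6 → E v1 v6 → E v5 v4 → E v1 v2 → False := fun x y z w =>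
    (h3 v5 v1 ⟨v6, x, y⟩).elim (fun hh => e14 (hh _ z)) (fun hh => e52 (hh _ w))
  have hS6 : E v6 v1 → E v2 v1 → E v6 v5 → E v2 v3 → False := fun x y z w =>
    (h3 v6 v2 ⟨v1, x, y⟩).elim (fun hh => e25 (hh _ z)) (fun hh => e63 (hh _ w))

  rcases a12 with x1 | x1 <;> rcases a23 with x2 | x2 <;> rcases a34 with x3 | x3 <;>
    rcases a45 with x4 | x4 <;> rcases a56 with x5 | x5 <;> rcases a61 with x6 | x6 <;>
    first
    | exact hF1 x1 x2 x3
    | exact hB1 x3 x2 x1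
    | exact hA1 x1 x2 x3
    | exact hC1 x1 x2 x3
    | exact hS1 x1 x2 x6 x3
    | exact hF2 x2 x3 x4
    | exact hB2 x4 x3 x2
    | exact hA2 x2 x3 x4
    | exact hC2 x2 x3 x4
    | exact hS2 x2 x3 x1 x4
    | exact hF3 x3 x4 x5
    | exact hB3 x5 x4 x3
    | exact hA3 x3 x4 x5
    | exact hC3 x3 x4 x5
    | exact hS3 x3 x4 x2 x5
    | exact hF4 x4 x5 x6
    | exact hB4 x6 x5 x4
    | exact hA4 x4 x5 x6
    | exact hC4 x4 x5 x6
    | exact hS4 x4 x5 x3 x6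
    | exact hF5 x5 x6 x1
    | exact hB5 x1 x6 x5
    | exact hA5 x5 x6 x1
    | exact hC5 x5 x6 x1
    | exact hS5 x5 x6 x4 x1
    | exact hF6 x6 x1 x2
    | exact hB6 x2 x1 x6
    | exact hA6 x6 x1 x2
    | exact hC6 x6 x1 x2
    | exact hS6 x6 x1 x5 x2
end

section
/- Up to isomorphism, there are exactly ten 2-qBMGs on four vertices {v1,v2,v3,v4} whose underlying undirected graph is the chordless 4-cycle v1v2v3v4v1. -/
/-- The underlying undirected graph is the chordless 4-cycle v1 v2 v3 v4 v1. -/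
def isC4Under (E : Fin 4 → Fin 4 → Prop) : Prop :=
  ∀ i j : Fin 4, QAdj E i j ↔ ((i.val + 1) % 4 = j.val ∨ (j.val + 1) % 4 = i.val)

/-! ### Auxiliary material for the proof -/

set_option linter.unusedVariables false

instance relOf.decidableRel {n : ℕ} (l : List (Fin n × Fin n)) : DecidableRel (relOf l) :=
  fun i j => inferInstanceAs (Decidable ((i,j) ∈ l))

instance QN1.dec {E : Fin 4 → Fin 4 → Prop} [DecidableRel E] : Decidable (QN1 E) :=
  inferInstanceAs (Decidable (∀ u v, u ≠ v → ¬ E u v → ¬ E v u → ¬ ∃ w t, E u t ∧ E v w ∧ E t w))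

instance QN2.dec {E : Fin 4 → Fin 4 → Prop} [DecidableRel E] : Decidable (QN2 E) :=
  inferInstanceAs (Decidable (∀ u v w t, E u v → E v w → E w t → E u t))

instance QN3.dec {E : Fin 4 → Fin 4 → Prop} [DecidableRel E] : Decidable (QN3 E) :=
  inferInstanceAs (Decidable
    (∀ u v, (∃ w, E u w ∧ E v w) → (∀ w, E u w → E v w) ∨ (∀ w, E v w → E u w)))

instance QBip.dec (c : Fin 4 → Bool) {E : Fin 4 → Fin 4 → Prop} [DecidableRel E] :
    Decidable (QBip c E) :=
  inferInstanceAs (Decidable (∀ u v, E u v → c u ≠ c v))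

instance IsQBMG.dec (c : Fin 4 → Bool) {E : Fin 4 → Fin 4 → Prop} [DecidableRel E] :
    Decidable (IsQBMG c E) :=
  inferInstanceAs (Decidable (QBip c E ∧ QN1 E ∧ QN2 E ∧ QN3 E))

instance isC4Under.dec {E : Fin 4 → Fin 4 → Prop} [DecidableRel E] : Decidable (isC4Under E) :=
  inferInstanceAs (Decidable
    (∀ i j : Fin 4, (E i j ∨ E j i) ↔ ((i.val + 1) % 4 = j.val ∨ (j.val + 1) % 4 = i.val)))

/-- The ten representatives. -/
def qReps : List (List (Fin 4 × Fin 4)) :=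
  [ [(1,0),(2,1),(3,0),(3,2)],
    [(1,0),(2,1),(2,3),(3,0)],
    [(0,3),(1,0),(2,1),(2,3),(3,0)],
    [(1,0),(2,1),(2,3),(3,0),(3,2)],
    [(1,0),(1,2),(3,0),(3,2)],
    [(0,3),(1,0),(1,2),(3,0),(3,2)],
    [(0,3),(1,0),(1,2),(2,3),(3,0),(3,2)],
    [(0,3),(1,0),(1,2),(2,1),(2,3),(3,0)],
    [(1,0),(1,2),(2,1),(2,3),(3,0),(3,2)],
    [(0,1),(0,3),(1,0),(1,2),(2,1),(2,3),(3,0),(3,2)] ]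

/-- All 24 permutations of `Fin 4`, as plain functions. -/
def permList : List (Fin 4 → Fin 4) :=
  [![0,1,2,3], ![0,1,3,2], ![0,2,1,3], ![0,2,3,1], ![0,3,1,2], ![0,3,2,1],
   ![1,0,2,3], ![1,0,3,2], ![1,2,0,3], ![1,2,3,0], ![1,3,0,2], ![1,3,2,0],
   ![2,0,1,3], ![2,0,3,1], ![2,1,0,3], ![2,1,3,0], ![2,3,0,1], ![2,3,1,0],
   ![3,0,1,2], ![3,0,2,1], ![3,1,0,2], ![3,1,2,0], ![3,2,0,1], ![3,2,1,0]]

abbrev B8 := Bool × Bool × Bool × Bool × Bool × Bool × Bool × Bool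

def arcB (x : B8) (i j : Fin 4) : Bool :=
  match i.val, j.val with
  | 0, 1 => x.1
  | 1, 0 => x.2.1
  | 1, 2 => x.2.2.1
  | 2, 1 => x.2.2.2.1
  | 2, 3 => x.2.2.2.2.1
  | 3, 2 => x.2.2.2.2.2.1
  | 3, 0 => x.2.2.2.2.2.2.1
  | 0, 3 => x.2.2.2.2.2.2.2
  | _, _ => false

def arcE (x : B8) : Fin 4 → Fin 4 → Prop := fun i j => arcB x i j = true

instance arcE.dec (x : B8) : DecidableRel (arcE x) :=
  fun i j => inferInstanceAs (Decidable (_ = true))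

set_option maxRecDepth 100000 in
set_option maxHeartbeats 1000000 in
theorem qKey : ∀ x : B8, isC4Under (arcE x) → QN1 (arcE x) → QN2 (arcE x) → QN3 (arcE x) →
    ∃ l ∈ qReps, ∃ g ∈ permList, ∀ u v, arcE x u v ↔ relOf l (g u) (g v) := by decide

set_option maxRecDepth 10000 in
theorem permBij : ∀ g ∈ permList, Function.Bijective g := by
  intro g hg
  rw [Fintype.bijective_iff_injective_and_card]
  refine ⟨?_, rfl⟩
  revert g hg
  decide

set_option maxRecDepth 10000 in
set_option maxHeartbeats 1000000 in
theorem permComplete : ∀ φ : Equiv.Perm (Fin 4), ∃ g ∈ permList, ∀ u, φ u = g u := by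
  intro φ
  have : ∀ f : Fin 4 → Fin 4, Function.Injective f → ∃ g ∈ permList, ∀ u, f u = g u := by decide
  exact this φ φ.injective

theorem qIso_to_perm {E E' : Fin 4 → Fin 4 → Prop} (h : QIso E E') :
    ∃ g ∈ permList, ∀ u v, E u v ↔ E' (g u) (g v) := by
  obtain ⟨φ, hφ⟩ := h
  obtain ⟨g, hg, he⟩ := permComplete φ
  exact ⟨g, hg, fun u v => by rw [← he u, ← he v]; exact hφ u v⟩

theorem perm_to_qIso {E E' : Fin 4 → Fin 4 → Prop} {g : Fin 4 → Fin 4} (hg : g ∈ permList)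
    (h : ∀ u v, E u v ↔ E' (g u) (g v)) : QIso E E' :=
  ⟨Equiv.ofBijective g (permBij g hg), h⟩

theorem ten_qBMGs_on_C4 :
    ∃ L : List (Fin 4 → Fin 4 → Prop), L.length = 10 ∧
      (∀ E ∈ L, (∃ c, IsQBMG c E) ∧ isC4Under E) ∧
      L.Pairwise (fun E E' => ¬ QIso E E') ∧
      (∀ E : Fin 4 → Fin 4 → Prop, (∃ c, IsQBMG c E) → isC4Under E →
        ∃ E' ∈ L, QIso E E') := by
  classical
  refine ⟨qReps.map relOf, rfl, ?_, ?_, ?_⟩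
  · intro E hE
    simp only [qReps, List.map_cons, List.map_nil, List.mem_cons, List.not_mem_nil, or_false] at hE
    rcases hE with rfl|rfl|rfl|rfl|rfl|rfl|rfl|rfl|rfl|rfl <;>
      exact ⟨⟨fun i => decide (i.val % 2 = 0), by decide⟩, by decide⟩
  · rw [List.pairwise_map]
    have h' : qReps.Pairwise
        (fun a b => ¬ ∃ g ∈ permList, ∀ u v, relOf a u v ↔ relOf b (g u) (g v)) := by
      set_option maxRecDepth 100000 in
      set_option maxHeartbeats 1000000 in decide
    exact h'.imp (fun h hiso => h (qIso_to_perm hiso))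
  · intro E hc h4
    obtain ⟨c, _, h1, h2, h3⟩ := hc
    let f : Fin 4 → Fin 4 → Bool := fun i j => decide (E i j)
    have hf : ∀ i j, E i j ↔ f i j = true := by intro i j; simp [f]
    have hno : ∀ i j : Fin 4, ¬((i.val + 1) % 4 = j.val ∨ (j.val + 1) % 4 = i.val) → ¬ E i j :=
      fun i j h hij => h ((h4 i j).1 (Or.inl hij))
    set x : B8 := (f 0 1, f 1 0, f 1 2, f 2 1, f 2 3, f 3 2, f 3 0, f 0 3) with hx
    have hE' : E = arcE x := by
      funext i j
      apply propext
      fin_cases i <;> fin_cases j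
      case _ => exact iff_of_false (hno _ _ (by decide)) Bool.false_ne_true
      case _ => exact hf 0 1
      case _ => exact iff_of_false (hno _ _ (by decide)) Bool.false_ne_true
      case _ => exact hf 0 3
      case _ => exact hf 1 0
      case _ => exact iff_of_false (hno _ _ (by decide)) Bool.false_ne_true
      case _ => exact hf 1 2
      case _ => exact iff_of_false (hno _ _ (by decide)) Bool.false_ne_true
      case _ => exact iff_of_false (hno _ _ (by decide)) Bool.false_ne_true
      case _ => exact hf 2 1
      case _ => exact iff_of_false (hno _ _ (by decide)) Bool.false_ne_true
      case _ => exact hf 2 3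
      case _ => exact hf 3 0
      case _ => exact iff_of_false (hno _ _ (by decide)) Bool.false_ne_true
      case _ => exact hf 3 2
      case _ => exact iff_of_false (hno _ _ (by decide)) Bool.false_ne_true
    rw [hE'] at h1 h2 h3 h4 ⊢
    obtain ⟨l, hl, g, hg, hiff⟩ := qKey x h4 h1 h2 h3
    exact ⟨relOf l, List.mem_map_of_mem (f := relOf) hl, perm_to_qIso hg hiff⟩
end

section
/- Let G be a digraph satisfying the bi-transitivity axiom (N2), and let Γ be an orientation of G that admits a topological ordering (its vertices can be labeled v1,...,vn so that every edge vivj of Γ has i < j). Let Δ be the subdigraph of Γ induced on a vertex set T ∪ Z whose underlying undirected graph is a complete bipartite graph (biclique). Then Δ satisfies (N1) and (N2). -/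
theorem biclique_orientation_N1_N2 {V : Type*} (E Γ : V → V → Prop)
    (hN2 : QN2 E)
    (hsub : ∀ u v, Γ u v → E u v)
    (horient : ∀ u v, Γ u v → ¬ Γ v u)
    (hcover : ∀ u v, E u v → Γ u v ∨ Γ v u)
    (f : V → ℕ) (htopo : ∀ u v, Γ u v → f u < f v)
    (T Z : Set V) (hdisj : Disjoint T Z)
    (hbic : ∀ u ∈ T ∪ Z, ∀ v ∈ T ∪ Z,
      (QAdj Γ u v ↔ ((u ∈ T ∧ v ∈ Z) ∨ (u ∈ Z ∧ v ∈ T)))) :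
    QN1 (fun u v : (T ∪ Z : Set V) => Γ u.val v.val) ∧
    QN2 (fun u v : (T ∪ Z : Set V) => Γ u.val v.val) := by
  constructor
  · rintro u v hne hnuv hnvu ⟨w, t, hut, hvw, htw⟩
    have hd : ∀ x : V, x ∈ T → x ∉ Z := fun x hx hz => Set.disjoint_left.mp hdisj hx hz
    have h1 := (hbic u.val u.prop t.val t.prop).mp (Or.inl hut)
    have h2 := (hbic v.val v.prop w.val w.prop).mp (Or.inl hvw)
    have h3 := (hbic t.val t.prop w.val w.prop).mp (Or.inl htw)
    have h4 : ¬ ((u.val ∈ T ∧ v.val ∈ Z) ∨ (u.val ∈ Z ∧ v.val ∈ T)) := by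
      intro h
      exact (not_or.mpr ⟨hnuv, hnvu⟩) ((hbic u.val u.prop v.val v.prop).mpr h)
    have hdu := hd u.val; have hdv := hd v.val; have hdw := hd w.val; have hdt := hd t.val
    tauto
  · rintro u v w t huv hvw hwt
    have hE : E u.val t.val := hN2 u.val v.val w.val t.val (hsub _ _ huv) (hsub _ _ hvw) (hsub _ _ hwt)
    rcases hcover _ _ hE with h | h
    · exact h
    · exfalso
      have := htopo _ _ h
      have h1 := htopo _ _ huv
      have h2 := htopo _ _ hvw
      have h3 := htopo _ _ hwt
      omega
end

section
/- Let G be a 2-qBMG, Γ an orientation of G admitting a topological ordering, and Δ the subdigraph of Γ induced on a biclique T ∪ Z of the underlying undirected graph of G. If G has no symmetric edges with both endpoints in T ∪ Z, then Δ satisfies (N3): whenever two vertices of Δ have a common out-neighbor in Δ, the out-neighborhood in Δ of one contains that of the other. -/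
theorem biclique_orientation_N3 {V : Type*} (c : V → Bool) (E Γ : V → V → Prop)
    (hqbmg : IsQBMG c E)
    (hsub : ∀ u v, Γ u v → E u v)
    (horient : ∀ u v, Γ u v → ¬ Γ v u)
    (hcover : ∀ u v, E u v → Γ u v ∨ Γ v u)
    (f : V → ℕ) (htopo : ∀ u v, Γ u v → f u < f v)
    (T Z : Set V) (hdisj : Disjoint T Z)
    (hbic : ∀ u ∈ T ∪ Z, ∀ v ∈ T ∪ Z,
      (QAdj Γ u v ↔ ((u ∈ T ∧ v ∈ Z) ∨ (u ∈ Z ∧ v ∈ T))))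
    (hnosym : ∀ u ∈ T ∪ Z, ∀ v ∈ T ∪ Z, ¬ (E u v ∧ E v u)) :
    QN3 (fun u v : (T ∪ Z : Set V) => Γ u.val v.val) := by
  -- On T ∪ Z, Γ agrees with E, since there are no symmetric E-edges there.
  have key : ∀ u ∈ T ∪ Z, ∀ v ∈ T ∪ Z, (Γ u v ↔ E u v) := by
    intro u hu v hv
    constructor
    · exact hsub u v
    · intro hE
      rcases hcover u v hE with h | h
      · exact h
      · exact absurd ⟨hE, hsub v u h⟩ (hnosym u hu v hv)
  rintro ⟨u, hu⟩ ⟨v, hv⟩ ⟨⟨w, hw⟩, huw, hvw⟩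
  have hEN3 := hqbmg.2.2.2
  rcases hEN3 u v ⟨w, (key u hu w hw).mp huw, (key v hv w hw).mp hvw⟩ with h | h
  · left
    rintro ⟨x, hx⟩ hux
    exact (key v hv x hx).mpr (h x ((key u hu x hx).mp hux))
  · right
    rintro ⟨x, hx⟩ hvx
    exact (key u hu x hx).mpr (h x ((key v hv x hx).mp hvx))
end

section
/- Let Γ be an oriented bipartite digraph that is a bitournament (for any two vertices u,w in different color classes, exactly one of uw, wu is an edge) and satisfies bi-transitivity (N2). Then Γ is acyclic: it contains no directed cycle. -/
theorem bitransitive_bitournament_acyclic {V : Type*} (Γ : V → V → Prop)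
    (c : V → Bool)
    (hbip : ∀ u v, Γ u v → c u ≠ c v)
    (horient : ∀ u v, Γ u v → ¬ Γ v u)
    (htour : ∀ u v, c u ≠ c v → Γ u v ∨ Γ v u)
    (hN2 : QN2 Γ) :
    ∀ v, ¬ Relation.TransGen Γ v v := by
  have key : ∀ u v, Relation.TransGen Γ u v →
      (c u = c v → ∃ w, Γ u w ∧ Γ w v) ∧ (c u ≠ c v → Γ u v) := by
    intro u v h
    induction h with
    | single h => exact ⟨fun hc => absurd hc (hbip _ _ h), fun _ => h⟩
    | @tail v w hp h ih =>
      by_cases hc : c u = c v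
      · obtain ⟨x, hx1, hx2⟩ := ih.1 hc
        have huw : Γ u w := hN2 _ _ _ _ hx1 hx2 h
        exact ⟨fun hc' => absurd hc' (hc ▸ hbip _ _ h), fun _ => huw⟩
      · have huv : Γ u v := ih.2 hc
        have hcw : c u = c w := by
          have := hbip _ _ h
          revert hc this; cases c u <;> cases c v <;> cases c w <;> simp
        exact ⟨fun _ => ⟨v, huv, h⟩, fun h' => absurd hcw h'⟩
  intro v h
  obtain ⟨w, h1, h2⟩ := (key v v h).1 rfl
  exact horient _ _ h1 h2
end

section
/- In any 2-qBMG, if v1v2v3v4v5 is a chordless path in the underlying undirected graph with directed edges v1v2, v3v2 present (v2 is a sink on the path), then the directed edge v3v4 is present (and v4v3 is not). -/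
theorem P5_sink_case_forces_edge {V : Type*} (c : V → Bool) (E : V → V → Prop)
    (h : IsQBMG c E) (v1 v2 v3 v4 v5 : V)
    (hne : [v1, v2, v3, v4, v5].Pairwise (· ≠ ·))
    (a12 : QAdj E v1 v2) (a23 : QAdj E v2 v3) (a34 : QAdj E v3 v4) (a45 : QAdj E v4 v5)
    (n13 : ¬ QAdj E v1 v3) (n14 : ¬ QAdj E v1 v4) (n15 : ¬ QAdj E v1 v5)
    (n24 : ¬ QAdj E v2 v4) (n25 : ¬ QAdj E v2 v5) (n35 : ¬ QAdj E v3 v5)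
    (h12 : E v1 v2) (h32 : E v3 v2) :
    E v3 v4 ∧ ¬ E v4 v3 := by
  have hne14 : v4 ≠ v1 := by
    simp only [List.pairwise_cons] at hne
    exact fun hh => (hne.1 v4 (by simp) hh.symm)
  have h43 : ¬ E v4 v3 := by
    intro h43
    exact h.2.1 v4 v1 hne14 (fun hh => n14 (Or.inr hh)) (fun hh => n14 (Or.inl hh))
      ⟨v2, v3, h43, h12, h32⟩
  exact ⟨a34.resolve_right h43, h43⟩
end
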